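/- arXiv:0902.4036 — 2 statements merged into one kernel-verified Lean document; each statement's English description precedes it below -/
import Mathlib

section
/- (Leakage of randomized 1-out-of-2 string OT.) For every r ≥ 1 and every phase function θ, the leakage of the regular embedding ψ_θ of the primitive P^{OT_r} satisfies Δ(ψ_θ) ≥ −(1/2 + 2^{−r−1})·log₂(1/2 + 2^{−r−1}) + (2^r − 1)·(r+1)·2^{−r−1} − r/2 (the leakage of P^{ROT_r}); in particular Δ(ψ_θ) ≥ 1 − (r+3)/2^r. -/
open scoped BigOperators
open Matrix

noncomputable section

open scoped Classical in
/-- Base-2 von Neumann entropy of a matrix: minus the sum of `λ·log₂ λ` over the real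
eigenvalues (with multiplicity) if the matrix is Hermitian, and `0` otherwise. -/
def vNE {n : Type*} [Fintype n] (ρ : Matrix n n ℂ) : ℝ :=
  if h : ρ.IsHermitian then -∑ i, h.eigenvalues i * Real.logb 2 (h.eigenvalues i) else 0

/-- Shannon entropy (base 2), with the convention `0·log₂ 0 = 0`. -/
def shannon {α : Type*} [Fintype α] (p : α → ℝ) : ℝ :=
  -∑ a, p a * Real.logb 2 (p a)

/-- Marginal on the first component: `P_X`. -/
def margX {X Y : Type*} [Fintype Y] (P : X × Y → ℝ) (x : X) : ℝ := ∑ y, P (x, y)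

/-- Marginal on the second component: `P_Y`. -/
def margY {X Y : Type*} [Fintype X] (P : X × Y → ℝ) (y : Y) : ℝ := ∑ x, P (x, y)

/-- Mutual information `I(X;Y)` of a joint distribution `P` (base 2). -/
def mutualInfo {X Y : Type*} [Fintype X] [Fintype Y] (P : X × Y → ℝ) : ℝ :=
  ∑ x, ∑ y, P (x, y) * Real.logb 2 (P (x, y) / (margX P x * margY P y))

/-- The regular embedding `ψ_θ(x,y) = e^{iθ(x,y)}·√(P(x,y))`. -/
def regEmb {X Y : Type*} (P θ : X × Y → ℝ) (xy : X × Y) : ℂ :=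
  Complex.exp (Complex.I * θ xy) * (Real.sqrt (P xy) : ℂ)

/-- Reduced density matrix `ρ_A(θ)` of the regular embedding `ψ_θ`. -/
def rhoA {X Y : Type*} [Fintype Y] (P θ : X × Y → ℝ) : Matrix X X ℂ :=
  Matrix.of fun x x' => ∑ y, regEmb P θ (x, y) * star (regEmb P θ (x', y))

/-- Reduced density matrix `ρ_B(θ)` of the regular embedding `ψ_θ`. -/
def rhoB {X Y : Type*} [Fintype X] (P θ : X × Y → ℝ) : Matrix Y Y ℂ :=
  Matrix.of fun y y' => ∑ x, regEmb P θ (x, y) * star (regEmb P θ (x, y'))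

/-- Leakage `Δ(ψ_θ) = S(ρ_B(θ)) − I(X;Y)` of a regular embedding. -/
def leakReg {X Y : Type*} [Fintype X] [Fintype Y] (P θ : X × Y → ℝ) : ℝ :=
  vNE (rhoB P θ) - mutualInfo P

/-- Leakage `Δ_P` of a primitive: the infimum of the leakage over all phase functions. -/
def leakPrim {X Y : Type*} [Fintype X] [Fintype Y] (P : X × Y → ℝ) : ℝ :=
  ⨅ θ : X × Y → ℝ, leakReg P θ

/-- The randomized 1-out-of-2 string OT primitive `P^{OT_r}` on
`𝒳 = {0,1}^r × {0,1}^r` and `𝒴 = {0,1} × {0,1}^r`: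
`P((x₀,x₁),(c,y)) = 2^{−2r−1}` if `y = x_c`, and `0` otherwise. -/
def POTstr (r : ℕ) :
    ((Fin r → Bool) × (Fin r → Bool)) × (Bool × (Fin r → Bool)) → ℝ := fun p =>
  if p.2.2 = (if p.2.1 then p.1.2 else p.1.1) then 1 / 2 ^ (2 * r + 1) else 0


-- ===== auxiliary lemmas =====

section SpectralAux
variable {n : Type*} [Fintype n] [DecidableEq n]

lemma aux_trace_eq_sum_eigs {A : Matrix n n ℂ} (hA : A.IsHermitian) :
    A.trace = ((∑ i, hA.eigenvalues i : ℝ) : ℂ) := by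
  nth_rewrite 1 [hA.spectral_theorem]
  rw [Unitary.conjStarAlgAut_apply, Matrix.trace_mul_cycle]
  simp [Matrix.trace_diagonal, ← Matrix.star_eq_conjTranspose]

lemma aux_trace_sq_eq_sum_sq {A : Matrix n n ℂ} (hA : A.IsHermitian) :
    (A * A).trace = ((∑ i, (hA.eigenvalues i)^2 : ℝ) : ℂ) := by
  set U : Matrix n n ℂ := (hA.eigenvectorUnitary : Matrix n n ℂ) with hU
  set D : Matrix n n ℂ := diagonal (RCLike.ofReal ∘ hA.eigenvalues) with hD
  have h1 : star U * U = 1 := (Matrix.mem_unitaryGroup_iff').mp hA.eigenvectorUnitary.2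
  have h2 : A = U * D * star U := by
    have := hA.spectral_theorem; rw [Unitary.conjStarAlgAut_apply] at this; exact this
  have : A * A = U * (D * D) * star U := by
    rw [h2]
    calc (U*D*star U)*(U*D*star U) = U*D*((star U*U)*(D*star U)) := by
          simp only [Matrix.mul_assoc]
      _ = U*(D*D)*star U := by rw [h1, Matrix.one_mul]; simp only [Matrix.mul_assoc]
  rw [this, Matrix.trace_mul_cycle, ← Matrix.mul_assoc, h1, Matrix.one_mul, hD,
    Matrix.diagonal_mul_diagonal, Matrix.trace_diagonal]
  push_cast
  simp [pow_two]

lemma aux_sum_mul_logb_le {w : n → ℝ} (hw : ∀ i, 0 ≤ w i) (h1 : ∑ i, w i = 1)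
    {t : ℝ} (ht : ∑ i, w i ^ 2 = t) :
    ∑ i, w i * Real.logb 2 (w i) ≤ Real.logb 2 t := by
  classical
  set s := Finset.univ.filter (fun i => w i ≠ 0) with hs
  have hws : ∑ i ∈ s, w i = 1 := by
    rw [hs, Finset.sum_filter_of_ne (fun x _ h => h)]; exact h1
  have hlog : ∑ i ∈ s, w i * Real.log (w i) ≤ Real.log t := by
    have hcc : ConcaveOn ℝ (Set.Ioi 0) Real.log := strictConcaveOn_log_Ioi.concaveOn
    have := hcc.le_map_sum (t := s) (w := w) (p := w)
      (fun i _ => hw i) hws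
      (fun i hi => by
        simp only [hs, Finset.mem_filter] at hi
        exact lt_of_le_of_ne (hw i) (Ne.symm hi.2))
    simp only [smul_eq_mul] at this
    have hsq : ∑ i ∈ s, w i * w i = t := by
      rw [← ht, hs, Finset.sum_filter_of_ne]
      · simp [pow_two]
      · intro x _ h hx; simp [hx] at h
    rwa [hsq] at this
  have h2 : (0:ℝ) < Real.log 2 := Real.log_pos (by norm_num)
  have : ∑ i, w i * Real.logb 2 (w i) = (∑ i ∈ s, w i * Real.log (w i)) / Real.log 2 := by
    rw [Finset.sum_div]
    rw [hs, Finset.sum_filter_of_ne (p := fun i => w i ≠ 0)]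
    · exact Finset.sum_congr rfl fun i _ => by rw [Real.logb, mul_div_assoc]
    · intro x _ h hx; simp [hx, Real.logb] at h
  rw [this, Real.logb]
  exact (div_le_div_iff_of_pos_right h2).mpr hlog

open scoped ComplexOrder in
lemma aux_vNE_ge {A : Matrix n n ℂ} (hA : A.PosSemidef) (h1 : A.trace = 1)
    {t : ℝ} (ht : (A * A).trace = (t : ℂ)) : -Real.logb 2 t ≤ vNE A := by
  rw [vNE, dif_pos hA.1]
  apply neg_le_neg
  apply aux_sum_mul_logb_le (fun i => hA.eigenvalues_nonneg i)
  · have := aux_trace_eq_sum_eigs hA.1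
    rw [h1] at this
    exact_mod_cast this.symm
  · have := aux_trace_sq_eq_sum_sq hA.1
    rw [ht] at this
    exact_mod_cast this.symm

end SpectralAux

section PotAux
variable {r : ℕ}

lemma pot_nonneg (a) : 0 ≤ POTstr r a := by
  unfold POTstr; split <;> positivity

lemma pot_ne_iff {x : (Fin r → Bool) × (Fin r → Bool)} {y : Bool × (Fin r → Bool)} :
    POTstr r (x, y) ≠ 0 ↔ y.2 = (if y.1 then x.2 else x.1) := by
  unfold POTstr
  split <;> simp_all

lemma pot_eq_q {x : (Fin r → Bool) × (Fin r → Bool)} {y : Bool × (Fin r → Bool)}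
    (h : POTstr r (x, y) ≠ 0) : POTstr r (x, y) = 1 / 2 ^ (2 * r + 1) := by
  rw [pot_ne_iff] at h
  unfold POTstr
  rw [if_pos h]

lemma pot_struct {x x' : (Fin r → Bool) × (Fin r → Bool)} {y y' : Bool × (Fin r → Bool)}
    (h1 : POTstr r (x, y) ≠ 0) (h2 : POTstr r (x, y') ≠ 0)
    (h3 : POTstr r (x', y') ≠ 0) (h4 : POTstr r (x', y) ≠ 0) : x = x' ∨ y = y' := by
  rw [pot_ne_iff] at h1 h2 h3 h4
  rcases x with ⟨a, b⟩; rcases x' with ⟨a', b'⟩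
  rcases y with ⟨c, s⟩; rcases y' with ⟨c', s'⟩
  simp only at h1 h2 h3 h4
  cases c <;> cases c' <;> simp_all

end PotAux

section RegAux
variable {X Y : Type*} (P θ : X × Y → ℝ)

lemma regEmb_zero {a : X × Y} (h : P a = 0) : regEmb P θ a = 0 := by
  simp [regEmb, h]

lemma exp_mul_star_exp (a : X × Y) :
    Complex.exp (Complex.I * θ a) * star (Complex.exp (Complex.I * θ a)) = 1 := by
  rw [Complex.star_def, ← Complex.exp_conj, ← Complex.exp_add]
  simp [Complex.conj_ofReal]

lemma regEmb_mul_star {a : X × Y} (h : 0 ≤ P a) :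
    regEmb P θ a * star (regEmb P θ a) = ((P a : ℝ) : ℂ) := by
  unfold regEmb
  rw [star_mul']
  have hs : star ((Real.sqrt (P a) : ℂ)) = (Real.sqrt (P a) : ℂ) := by
    rw [Complex.star_def, Complex.conj_ofReal]
  rw [hs]
  calc Complex.exp (Complex.I * θ a) * (Real.sqrt (P a) : ℂ) *
        (star (Complex.exp (Complex.I * θ a)) * (Real.sqrt (P a) : ℂ))
      = (Complex.exp (Complex.I * θ a) * star (Complex.exp (Complex.I * θ a))) *
        ((Real.sqrt (P a) : ℂ) * (Real.sqrt (P a) : ℂ)) := by ring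
    _ = ((P a : ℝ) : ℂ) := by
        rw [exp_mul_star_exp]
        rw [one_mul, ← Complex.ofReal_mul, Real.mul_self_sqrt h]

end RegAux

section TermAux
variable {r : ℕ} (θ : ((Fin r → Bool) × (Fin r → Bool)) × (Bool × (Fin r → Bool)) → ℝ)

lemma pot_term_eq (x x' : (Fin r → Bool) × (Fin r → Bool)) (y y' : Bool × (Fin r → Bool)) :
    regEmb (POTstr r) θ (x, y) * star (regEmb (POTstr r) θ (x, y')) *
      (regEmb (POTstr r) θ (x', y') * star (regEmb (POTstr r) θ (x', y))) =
    (((2:ℝ) ^ (2 * r + 1)) ^ 2 * (POTstr r (x, y) * POTstr r (x, y') *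
      (POTstr r (x', y') * POTstr r (x', y))) : ℝ) := by
  set P := POTstr r
  by_cases h1 : P (x, y) = 0
  · simp [regEmb_zero _ θ h1, h1]
  by_cases h2 : P (x, y') = 0
  · simp [regEmb_zero _ θ h2, h2]
  by_cases h3 : P (x', y') = 0
  · simp [regEmb_zero _ θ h3, h3]
  by_cases h4 : P (x', y) = 0
  · simp [regEmb_zero _ θ h4, h4]
  have hq : (0:ℝ) < 1 / 2 ^ (2 * r + 1) := by positivity
  have e1 : P (x, y) = 1 / 2 ^ (2 * r + 1) := pot_eq_q h1
  have e2 : P (x, y') = 1 / 2 ^ (2 * r + 1) := pot_eq_q h2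
  have e3 : P (x', y') = 1 / 2 ^ (2 * r + 1) := pot_eq_q h3
  have e4 : P (x', y) = 1 / 2 ^ (2 * r + 1) := pot_eq_q h4
  have hval : ((2:ℝ) ^ (2 * r + 1)) ^ 2 * (P (x, y) * P (x, y') *
      (P (x', y') * P (x', y))) = (1 / 2 ^ (2 * r + 1)) ^ 2 := by
    rw [e1, e2, e3, e4]; field_simp
  rw [hval]
  rcases pot_struct h1 h2 h3 h4 with hxx | hyy
  · subst hxx
    calc regEmb P θ (x, y) * star (regEmb P θ (x, y')) *
          (regEmb P θ (x, y') * star (regEmb P θ (x, y)))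
        = (regEmb P θ (x, y) * star (regEmb P θ (x, y))) *
          (regEmb P θ (x, y') * star (regEmb P θ (x, y'))) := by ring
      _ = _ := by
          rw [regEmb_mul_star _ θ (pot_nonneg _), regEmb_mul_star _ θ (pot_nonneg _),
            pot_eq_q h1, pot_eq_q h2, ← Complex.ofReal_mul]
          push_cast
          ring
  · subst hyy
    calc regEmb P θ (x, y) * star (regEmb P θ (x, y)) *
          (regEmb P θ (x', y) * star (regEmb P θ (x', y)))
        = _ := by
          rw [regEmb_mul_star _ θ (pot_nonneg _), regEmb_mul_star _ θ (pot_nonneg _),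
            pot_eq_q h1, pot_eq_q h4, ← Complex.ofReal_mul]
          push_cast
          ring

end TermAux

section SumsAux
variable {r : ℕ}

lemma pot_sum_one : ∑ x, ∑ y, POTstr r (x, y) = 1 := by
  simp only [POTstr, Fintype.sum_prod_type]
  simp [Finset.sum_ite_eq', Finset.sum_const, Fintype.card_fun]
  have hp : (2:ℝ) ^ (2 * r + 1) = 2 ^ r * 2 ^ r * 2 := by
    rw [two_mul, pow_add, pow_add, pow_one]
  rw [hp]
  have h2 : (0:ℝ) < 2 ^ r := by positivity
  field_simp

lemma pot_G (y y' : Bool × (Fin r → Bool)) :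
    (∑ x : (Fin r → Bool) × (Fin r → Bool), POTstr r (x, y) * POTstr r (x, y')) =
    if y.1 = y'.1 then (if y.2 = y'.2 then 2 ^ r * (1 / 2 ^ (2 * r + 1) : ℝ) ^ 2 else 0)
    else (1 / 2 ^ (2 * r + 1) : ℝ) ^ 2 := by
  rcases y with ⟨c, s⟩; rcases y' with ⟨c', s'⟩
  cases c <;> cases c' <;>
    simp [POTstr, Fintype.sum_prod_type, ite_mul, mul_ite, Finset.sum_ite_eq',
      Finset.sum_ite_eq, Finset.sum_const, Fintype.card_fun, eq_comm, sq] <;>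
    try (split <;> simp [Finset.sum_const, Fintype.card_fun, mul_comm])

end SumsAux

section TraceAux
variable {r : ℕ} (θ : ((Fin r → Bool) × (Fin r → Bool)) × (Bool × (Fin r → Bool)) → ℝ)

open scoped ComplexOrder in
lemma rhoB_posSemidef : (rhoB (POTstr r) θ).PosSemidef := by
  have : rhoB (POTstr r) θ =
      (Matrix.of fun (y : Bool × (Fin r → Bool)) (x : (Fin r → Bool) × (Fin r → Bool)) =>
        regEmb (POTstr r) θ (x, y)) *
      (Matrix.of fun (y : Bool × (Fin r → Bool)) (x : (Fin r → Bool) × (Fin r → Bool)) =>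
        regEmb (POTstr r) θ (x, y))ᴴ := by
    ext y y'
    simp [rhoB, Matrix.mul_apply, Matrix.conjTranspose_apply]
  rw [this]
  exact Matrix.posSemidef_self_mul_conjTranspose _

lemma rhoB_trace_one : (rhoB (POTstr r) θ).trace = 1 := by
  have h : ∀ (y : Bool × (Fin r → Bool)) (x : (Fin r → Bool) × (Fin r → Bool)),
      regEmb (POTstr r) θ (x, y) * star (regEmb (POTstr r) θ (x, y)) =
      ((POTstr r (x, y) : ℝ) : ℂ) := fun y x => regEmb_mul_star _ θ (pot_nonneg _)
  have h2 : (rhoB (POTstr r) θ).trace = ((∑ y, ∑ x, POTstr r (x, y) : ℝ) : ℂ) := by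
    rw [Matrix.trace]
    push_cast
    exact Finset.sum_congr rfl fun y _ => by
      simp only [Matrix.diag_apply, rhoB, Matrix.of_apply, h]
  rw [h2, Finset.sum_comm, pot_sum_one, Complex.ofReal_one]

lemma rhoB_trace_sq : (rhoB (POTstr r) θ * rhoB (POTstr r) θ).trace =
    ((1 / 2 ^ (r + 1) + 1 / 2 ^ (2 * r + 1) : ℝ) : ℂ) := by
  have expand : (rhoB (POTstr r) θ * rhoB (POTstr r) θ).trace =
      ∑ y, ∑ y', ∑ x, ∑ x', regEmb (POTstr r) θ (x, y) * star (regEmb (POTstr r) θ (x, y')) *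
        (regEmb (POTstr r) θ (x', y') * star (regEmb (POTstr r) θ (x', y))) := by
    rw [Matrix.trace]
    refine Finset.sum_congr rfl fun y _ => ?_
    rw [Matrix.diag_apply, Matrix.mul_apply]
    refine Finset.sum_congr rfl fun y' _ => ?_
    simp only [rhoB, Matrix.of_apply]
    rw [Finset.sum_mul_sum]
  have step : ∀ y y' : Bool × (Fin r → Bool),
      (∑ x, ∑ x', regEmb (POTstr r) θ (x, y) * star (regEmb (POTstr r) θ (x, y')) *
        (regEmb (POTstr r) θ (x', y') * star (regEmb (POTstr r) θ (x', y)))) =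
      ((((2:ℝ) ^ (2 * r + 1)) ^ 2 *
        ((∑ x, POTstr r (x, y) * POTstr r (x, y')) *
         (∑ x', POTstr r (x', y') * POTstr r (x', y))) : ℝ) : ℂ) := by
    intro y y'
    have hreal : ((2:ℝ) ^ (2 * r + 1)) ^ 2 *
        ((∑ x, POTstr r (x, y) * POTstr r (x, y')) *
         (∑ x', POTstr r (x', y') * POTstr r (x', y))) =
        ∑ x, ∑ x', ((2:ℝ) ^ (2 * r + 1)) ^ 2 * (POTstr r (x, y) * POTstr r (x, y') *
          (POTstr r (x', y') * POTstr r (x', y))) := by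
      rw [Finset.sum_mul_sum, Finset.mul_sum]
      refine Finset.sum_congr rfl fun x _ => ?_
      rw [Finset.mul_sum]
    calc (∑ x, ∑ x', regEmb (POTstr r) θ (x, y) * star (regEmb (POTstr r) θ (x, y')) *
        (regEmb (POTstr r) θ (x', y') * star (regEmb (POTstr r) θ (x', y))))
        = ∑ x, ∑ x', ((((2:ℝ) ^ (2 * r + 1)) ^ 2 * (POTstr r (x, y) * POTstr r (x, y') *
            (POTstr r (x', y') * POTstr r (x', y))) : ℝ) : ℂ) :=
          Finset.sum_congr rfl fun x _ => Finset.sum_congr rfl fun x' _ =>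
            pot_term_eq θ x x' y y'
      _ = _ := by rw [hreal]; push_cast; rfl
  have cast_sum : (∑ y, ∑ y' : Bool × (Fin r → Bool),
      ((((2:ℝ) ^ (2 * r + 1)) ^ 2 *
        ((∑ x, POTstr r (x, y) * POTstr r (x, y')) *
         (∑ x', POTstr r (x', y') * POTstr r (x', y))) : ℝ) : ℂ)) =
      ((∑ y, ∑ y' : Bool × (Fin r → Bool), (((2:ℝ) ^ (2 * r + 1)) ^ 2 *
        ((∑ x, POTstr r (x, y) * POTstr r (x, y')) *
         (∑ x', POTstr r (x', y') * POTstr r (x', y)))) : ℝ) : ℂ) := by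
    push_cast; rfl
  rw [expand]
  rw [Finset.sum_congr rfl fun y _ => Finset.sum_congr rfl fun y' _ => step y y', cast_sum]
  congr 1
  have key : ∀ y y' : Bool × (Fin r → Bool),
      ((2:ℝ) ^ (2 * r + 1)) ^ 2 *
        ((∑ x, POTstr r (x, y) * POTstr r (x, y')) *
         (∑ x', POTstr r (x', y') * POTstr r (x', y))) =
      ((2:ℝ) ^ (2 * r + 1)) ^ 2 *
        ((if y.1 = y'.1 then (if y.2 = y'.2 then 2 ^ r * (1 / 2 ^ (2 * r + 1) : ℝ) ^ 2 else 0)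
          else (1 / 2 ^ (2 * r + 1) : ℝ) ^ 2) *
         (if y'.1 = y.1 then (if y'.2 = y.2 then 2 ^ r * (1 / 2 ^ (2 * r + 1) : ℝ) ^ 2 else 0)
          else (1 / 2 ^ (2 * r + 1) : ℝ) ^ 2)) := fun y y' => by
    rw [pot_G y y', pot_G y' y]
  rw [Finset.sum_congr rfl fun y _ => Finset.sum_congr rfl fun y' _ => key y y']
  simp only [Fintype.sum_prod_type, Fintype.sum_bool]
  simp only [ite_mul, mul_ite, mul_zero, zero_mul, if_true, if_false, eq_self_iff_true,
    Bool.true_eq_false, Bool.false_eq_true, if_neg, if_pos]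
  simp [Finset.sum_ite_eq', Finset.sum_ite_eq, Finset.sum_const, Fintype.card_fun, eq_comm]
  have hp1 : (2:ℝ) ^ (2 * r + 1) = 2 ^ r * 2 ^ r * 2 := by
    rw [two_mul, pow_add, pow_add, pow_one]
  have hp2 : (2:ℝ) ^ (r + 1) = 2 ^ r * 2 := by rw [pow_add, pow_one]
  have h2 : (0:ℝ) < 2 ^ r := by positivity
  rw [hp1, hp2]
  field_simp
  ring

end TraceAux

section MIAux
variable {r : ℕ}

lemma pot_margX (x : (Fin r → Bool) × (Fin r → Bool)) :
    margX (POTstr r) x = 2 * (1 / 2 ^ (2 * r + 1)) := by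
  unfold margX POTstr
  simp [Fintype.sum_prod_type, Fintype.sum_bool, Finset.sum_ite_eq', Finset.sum_ite_eq]
  ring

lemma pot_margY (y : Bool × (Fin r → Bool)) :
    margY (POTstr r) y = 2 ^ r * (1 / 2 ^ (2 * r + 1)) := by
  rcases y with ⟨c, s⟩
  unfold margY POTstr
  cases c
  · simp only [Fintype.sum_prod_type]
    rw [Finset.sum_comm]
    simp [Finset.sum_ite_eq', Finset.sum_ite_eq, Finset.sum_const, Fintype.card_fun]
  · simp [Fintype.sum_prod_type, Finset.sum_ite_eq', Finset.sum_ite_eq, Finset.sum_const,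
      Fintype.card_fun]

lemma pot_mutualInfo : mutualInfo (POTstr r) = r := by
  unfold mutualInfo
  have hterm : ∀ x y, POTstr r (x, y) *
      Real.logb 2 (POTstr r (x, y) / (margX (POTstr r) x * margY (POTstr r) y)) =
      POTstr r (x, y) * (r : ℝ) := by
    intro x y
    by_cases h : POTstr r (x, y) = 0
    · rw [h]; ring
    · rw [pot_eq_q h, pot_margX, pot_margY]
      congr 1
      have hval : ((1:ℝ) / 2 ^ (2 * r + 1)) /
          (2 * (1 / 2 ^ (2 * r + 1)) * (2 ^ r * (1 / 2 ^ (2 * r + 1)))) = 2 ^ r := by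
        have hp1 : (2:ℝ) ^ (2 * r + 1) = 2 ^ r * 2 ^ r * 2 := by
          rw [two_mul, pow_add, pow_add, pow_one]
        have h2 : (0:ℝ) < 2 ^ r := by positivity
        rw [hp1]
        field_simp
      rw [hval, Real.logb_pow, Real.logb_self_eq_one (by norm_num : (1:ℝ) < 2), mul_one]
  rw [Finset.sum_congr rfl fun x _ => Finset.sum_congr rfl fun y _ => hterm x y]
  have : (∑ x, ∑ y, POTstr r (x, y) * (r : ℝ)) = (∑ x, ∑ y, POTstr r (x, y)) * r := by
    rw [Finset.sum_mul]
    exact Finset.sum_congr rfl fun x _ => (Finset.sum_mul _ _ _).symm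
  rw [this, pot_sum_one, one_mul]

end MIAux

/-- **Leakage of randomized 1-out-of-2 string OT.** For every `r ≥ 1` and
every phase function `θ`, the leakage of the regular embedding `ψ_θ` of `P^{OT_r}` is at
least the leakage of `P^{ROT_r}`; in particular `Δ(ψ_θ) ≥ 1 − (r+3)/2^r`. -/
theorem leakage_POTstr (r : ℕ) (hr : 1 ≤ r)
    (θ : ((Fin r → Bool) × (Fin r → Bool)) × (Bool × (Fin r → Bool)) → ℝ) :
    -(1 / 2 + 1 / 2 ^ (r + 1)) * Real.logb 2 (1 / 2 + 1 / 2 ^ (r + 1)) +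
        ((2 : ℝ) ^ r - 1) * ((r : ℝ) + 1) / 2 ^ (r + 1) - (r : ℝ) / 2 ≤
      leakReg (POTstr r) θ ∧
    1 - ((r : ℝ) + 3) / 2 ^ r ≤ leakReg (POTstr r) θ := by
  have hv : -Real.logb 2 (1 / 2 ^ (r + 1) + 1 / 2 ^ (2 * r + 1)) ≤
      vNE (rhoB (POTstr r) θ) :=
    aux_vNE_ge (rhoB_posSemidef θ) (rhoB_trace_one θ) (rhoB_trace_sq θ)
  have hleak : leakReg (POTstr r) θ = vNE (rhoB (POTstr r) θ) - r := by
    rw [leakReg, pot_mutualInfo]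
  set x : ℝ := 1 / 2 ^ r with hxdef
  have hx0 : 0 < x := by rw [hxdef]; positivity
  have hx2 : x ≤ 1 / 2 := by
    rw [hxdef, div_le_div_iff₀ (by positivity) (by norm_num)]
    calc (1:ℝ) * 2 = 2 ^ 1 := by norm_num
      _ ≤ 2 ^ r := by
          apply pow_le_pow_right₀ (by norm_num) hr
      _ = 1 * 2 ^ r := by ring
  set l : ℝ := Real.logb 2 (1 + x) with hldef
  have hl0 : 0 ≤ l := Real.logb_nonneg (by norm_num) (by linarith)
  have hlog1 : Real.log (1 + x) ≤ x := by
    have h := Real.log_le_sub_one_of_pos (show (0:ℝ) < 1 + x by linarith)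
    linarith
  have hlog2 : (1/2 : ℝ) < Real.log 2 := by
    have := Real.log_two_gt_d9
    linarith
  have hl2x : l ≤ 2 * x := by
    rw [hldef, Real.logb, div_le_iff₀ (by linarith)]
    nlinarith
  have ht_eq : (1 / 2 ^ (r + 1) + 1 / 2 ^ (2 * r + 1) : ℝ) = (1 + x) / 2 ^ (r + 1) := by
    rw [hxdef]
    have hp : (2:ℝ) ^ (2 * r + 1) = 2 ^ r * 2 ^ (r + 1) := by
      rw [← pow_add]; congr 1; ring
    have h2 : (0:ℝ) < 2 ^ r := by positivity
    have h3 : (0:ℝ) < 2 ^ (r + 1) := by positivity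
    rw [hp]
    field_simp
  have hlogt : Real.logb 2 (1 / 2 ^ (r + 1) + 1 / 2 ^ (2 * r + 1) : ℝ) = l - (r + 1) := by
    rw [ht_eq, Real.logb_div (by positivity) (by positivity), Real.logb_pow,
      Real.logb_self_eq_one (by norm_num : (1:ℝ) < 2), mul_one, hldef]
    push_cast
    ring
  have hlb : 1 - l ≤ leakReg (POTstr r) θ := by
    rw [hleak]
    rw [hlogt] at hv
    linarith
  have h1mx : 2 * (1 - x) ≤ (r : ℝ) := by
    rcases eq_or_lt_of_le hr with h | h
    · rw [hxdef, ← h]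
      norm_num
    · have h2 : (2:ℕ) ≤ r := h
      have h3 : (2:ℝ) ≤ (r:ℝ) := by exact_mod_cast h2
      linarith
  constructor
  · have e1 : (1:ℝ) / 2 + 1 / 2 ^ (r + 1) = (1 + x) / 2 := by
      rw [hxdef]
      have hp : (2:ℝ) ^ (r + 1) = 2 ^ r * 2 := by rw [pow_add, pow_one]
      have h2 : (0:ℝ) < 2 ^ r := by positivity
      rw [hp]
      field_simp
    have e2 : ((2:ℝ) ^ r - 1) * ((r : ℝ) + 1) / 2 ^ (r + 1) = (1 - x) * ((r:ℝ) + 1) / 2 := by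
      rw [hxdef]
      have hp : (2:ℝ) ^ (r + 1) = 2 ^ r * 2 := by rw [pow_add, pow_one]
      have h2 : (0:ℝ) < 2 ^ r := by positivity
      rw [hp]
      field_simp
    have e3 : Real.logb 2 ((1 + x) / 2) = l - 1 := by
      rw [Real.logb_div (by linarith) (by norm_num),
        Real.logb_self_eq_one (by norm_num : (1:ℝ) < 2), hldef]
    rw [e1, e2, e3]
    have key : -((1 + x) / 2) * (l - 1) + (1 - x) * ((r:ℝ) + 1) / 2 - (r:ℝ) / 2 ≤ 1 - l := by
      nlinarith [mul_le_mul_of_nonneg_right h1mx hx0.le,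
        mul_le_mul_of_nonneg_left hl2x (by linarith : (0:ℝ) ≤ 1 - x)]
    linarith
  · have hx3 : ((r:ℝ) + 3) / 2 ^ r = ((r:ℝ) + 3) * x := by rw [hxdef]; ring
    have hr0 : (0:ℝ) ≤ (r:ℝ) := Nat.cast_nonneg r
    rw [hx3]
    nlinarith [hlb, hl2x]
end
end

section
/- (Non-negativity of leakage.) For every primitive P on a finite product 𝒳×𝒴 and every phase function θ, the regular embedding ψ_θ satisfies S(ρ_B(θ)) ≥ I(X;Y) and S(ρ_A(θ)) ≥ I(X;Y); i.e. the leakage Δ(ψ_θ) of every regular embedding is non-negative. -/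
open scoped BigOperators
open Matrix

noncomputable section

open Complex Finset
open scoped ComplexOrder
open scoped Classical

namespace LeakAux

variable {Y ι κ : Type*} [Fintype Y] [Fintype ι] [Fintype κ]

def ip (u : ι → Y → ℂ) (z : Y → ℂ) (k : ι) : ℂ := ∑ y, (starRingEnd ℂ) (u k y) * z y

def Ortho (u : ι → Y → ℂ) : Prop :=
  ∀ k k', ∑ y, (starRingEnd ℂ) (u k y) * u k' y = if k = k' then 1 else 0

def Complete (u : ι → Y → ℂ) : Prop :=
  ∀ y y', ∑ k, u k y * (starRingEnd ℂ) (u k y') = if y = y' then 1 else 0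

lemma parseval {u : ι → Y → ℂ} (hu : Complete u) (z w : Y → ℂ) :
    ∑ k, (starRingEnd ℂ) (ip u z k) * ip u w k = ∑ y, (starRingEnd ℂ) (z y) * w y := by
  have h1 : ∀ k, (starRingEnd ℂ) (ip u z k) * ip u w k
      = ∑ y, ∑ y', ((starRingEnd ℂ) (z y) * w y') * (u k y * (starRingEnd ℂ) (u k y')) := by
    intro k
    have : (starRingEnd ℂ) (ip u z k) = ∑ y, u k y * (starRingEnd ℂ) (z y) := by
      simp [ip, _root_.map_sum]
    rw [this, ip, Finset.sum_mul_sum]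
    exact Finset.sum_congr rfl fun y _ => Finset.sum_congr rfl fun y' _ => by ring
  calc ∑ k, (starRingEnd ℂ) (ip u z k) * ip u w k
      = ∑ y, ∑ y', ((starRingEnd ℂ) (z y) * w y') * ∑ k, u k y * (starRingEnd ℂ) (u k y') := by
        rw [Finset.sum_congr rfl fun k _ => h1 k, Finset.sum_comm]
        exact Finset.sum_congr rfl fun y _ => by
          rw [Finset.sum_comm]
          exact Finset.sum_congr rfl fun y' _ => by rw [Finset.mul_sum]
    _ = ∑ y, ∑ y', ((starRingEnd ℂ) (z y) * w y') * (if y = y' then 1 else 0) := by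
        exact Finset.sum_congr rfl fun y _ => Finset.sum_congr rfl fun y' _ => by rw [hu]
    _ = ∑ y, (starRingEnd ℂ) (z y) * w y := by
        refine Finset.sum_congr rfl fun y _ => ?_
        simp

lemma parseval_normSq {u : ι → Y → ℂ} (hu : Complete u) (z : Y → ℂ) :
    ∑ k, normSq (ip u z k) = ∑ y, normSq (z y) := by
  have h := parseval hu z z
  have h2 : ((∑ k, normSq (ip u z k) : ℝ) : ℂ) = ((∑ y, normSq (z y) : ℝ) : ℂ) := by
    push_cast
    simpa only [Complex.normSq_eq_conj_mul_self] using h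
  exact_mod_cast h2


lemma ip_combo {v : κ → Y → ℂ} (hv : Ortho v) (c : κ → ℂ) (j' : κ) :
    ip v (fun y => ∑ j, c j * v j y) j' = c j' := by
  simp only [ip, Finset.mul_sum]
  rw [Finset.sum_comm]
  have h : ∀ j, ∑ y, (starRingEnd ℂ) (v j' y) * (c j * v j y)
      = c j * (if j' = j then 1 else 0) := by
    intro j
    rw [← hv j' j, Finset.mul_sum]
    exact Finset.sum_congr rfl fun y _ => by ring
  rw [Finset.sum_congr rfl fun j _ => h j]
  simp


lemma inv_antitone {u : ι → Y → ℂ} {v : κ → Y → ℂ} (hu : Complete u) (hv : Ortho v)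
    {α : ι → ℝ} {β : κ → ℝ} (hα : ∀ k, 0 < α k) (hβ : ∀ j, 0 < β j)
    (hform : ∀ z : Y → ℂ, ∑ k, α k * normSq (ip u z k) ≤ ∑ j, β j * normSq (ip v z j))
    (φ : Y → ℂ) :
    ∑ j, normSq (ip v φ j) / β j ≤ ∑ k, normSq (ip u φ k) / α k := by
  set a := ∑ k, normSq (ip u φ k) / α k with ha
  set b := ∑ j, normSq (ip v φ j) / β j with hb
  set c : κ → ℂ := fun j => (((β j)⁻¹ : ℝ) : ℂ) * ip v φ j with hc
  set z : Y → ℂ := fun y => ∑ j, c j * v j y with hzdef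
  have hz : ∀ j, ip v z j = c j := fun j => ip_combo hv c j
  -- (1) the β-form of z equals b
  have h1 : ∑ j, β j * normSq (ip v z j) = b := by
    rw [hb]
    refine Finset.sum_congr rfl fun j _ => ?_
    rw [hz j, hc]
    simp only [Complex.normSq_mul, Complex.normSq_ofReal]
    field_simp [pow_two, (hβ j).ne']
  -- (2) ∑_k (ip u z k) * conj (ip u φ k) = b
  have hS : ∑ y, (starRingEnd ℂ) (z y) * φ y = ((b : ℝ) : ℂ) := by
    have expand : ∀ y, (starRingEnd ℂ) (z y) * φ y
        = ∑ j, (starRingEnd ℂ) (c j) * ((starRingEnd ℂ) (v j y) * φ y) := by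
      intro y
      rw [hzdef]
      simp only [_root_.map_sum, _root_.map_mul, Finset.sum_mul]
      exact Finset.sum_congr rfl fun j _ => by ring
    rw [Finset.sum_congr rfl fun y _ => expand y, Finset.sum_comm]
    have : ∀ j, ∑ y, (starRingEnd ℂ) (c j) * ((starRingEnd ℂ) (v j y) * φ y)
        = (starRingEnd ℂ) (c j) * ip v φ j := by
      intro j; rw [ip, Finset.mul_sum]
    rw [Finset.sum_congr rfl fun j _ => this j]
    rw [hb]
    push_cast
    refine Finset.sum_congr rfl fun j _ => ?_
    rw [hc]
    simp only [_root_.map_mul, Complex.conj_ofReal]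
    rw [mul_assoc, ← Complex.normSq_eq_conj_mul_self, div_eq_inv_mul, Complex.ofReal_inv]
  have h2 : ∑ k, (ip u z k * (starRingEnd ℂ) (ip u φ k)).re = b := by
    have := parseval hu z φ
    rw [hS] at this
    have h3 : ∑ k, ip u z k * (starRingEnd ℂ) (ip u φ k) = ((b:ℝ):ℂ) := by
      have := congrArg (starRingEnd ℂ) this
      simpa [_root_.map_sum, Complex.conj_ofReal, mul_comm] using this
    calc ∑ k, (ip u z k * (starRingEnd ℂ) (ip u φ k)).re
        = (∑ k, ip u z k * (starRingEnd ℂ) (ip u φ k)).re := by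
          rw [Complex.re_sum]
      _ = b := by rw [h3]; simp
  -- (3) key expansion ≥ 0
  have h3 : (0:ℝ) ≤ ∑ k, α k * normSq (ip u z k - (((α k)⁻¹:ℝ):ℂ) * ip u φ k) :=
    Finset.sum_nonneg fun k _ => mul_nonneg (hα k).le (normSq_nonneg _)
  have h4 : ∑ k, α k * normSq (ip u z k - (((α k)⁻¹:ℝ):ℂ) * ip u φ k)
      = (∑ k, α k * normSq (ip u z k)) + a - 2 * b := by
    rw [ha, ← h2]
    rw [← Finset.sum_add_distrib, Finset.mul_sum, ← Finset.sum_sub_distrib]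
    refine Finset.sum_congr rfl fun k _ => ?_
    have hk := (hα k).ne'
    rw [Complex.normSq_sub]
    simp only [Complex.normSq_mul, Complex.normSq_ofReal, _root_.map_mul, Complex.conj_ofReal]
    have : (ip u z k * ((((α k)⁻¹:ℝ):ℂ) * (starRingEnd ℂ) (ip u φ k))).re
        = (α k)⁻¹ * (ip u z k * (starRingEnd ℂ) (ip u φ k)).re := by
      rw [show (ip u z k * ((((α k)⁻¹:ℝ):ℂ) * (starRingEnd ℂ) (ip u φ k)))
          = (((α k)⁻¹:ℝ):ℂ) * (ip u z k * (starRingEnd ℂ) (ip u φ k)) by ring]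
      rw [Complex.re_ofReal_mul]
    rw [this]
    field_simp
  have h5 := hform z
  rw [h1] at h5
  -- combine
  nlinarith [h3, h4, h5]


lemma log_form_mono {u : ι → Y → ℂ} {v : κ → Y → ℂ}
    (hu : Complete u) (hvo : Ortho v) (hvc : Complete v)
    {α : ι → ℝ} {β : κ → ℝ} (hα : ∀ k, 0 < α k) (hβ : ∀ j, 0 < β j)
    (φ : Y → ℂ) (hφ : ∑ y, normSq (φ y) = 1)
    (hform : ∀ z : Y → ℂ, ∑ k, α k * normSq (ip u z k) ≤ ∑ j, β j * normSq (ip v z j)) :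
    ∑ k, normSq (ip u φ k) * Real.log (α k) ≤ ∑ j, normSq (ip v φ j) * Real.log (β j) := by
  set c : ι → ℝ := fun k => normSq (ip u φ k) with hcdef
  set d : κ → ℝ := fun j => normSq (ip v φ j) with hddef
  have hc1 : ∑ k, c k = 1 := by rw [hcdef]; rw [parseval_normSq hu φ]; exact hφ
  have hd1 : ∑ j, d j = 1 := by rw [hddef]; rw [parseval_normSq hvc φ]; exact hφ
  have hcnn : ∀ k, 0 ≤ c k := fun k => normSq_nonneg _
  have hdnn : ∀ j, 0 ≤ d j := fun j => normSq_nonneg _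
  -- pointwise comparison of resolvent forms
  have hpt : ∀ t : ℝ, 0 ≤ t → ∑ j, d j / (β j + t) ≤ ∑ k, c k / (α k + t) := by
    intro t ht
    refine inv_antitone hu hvo (fun k => by linarith [hα k]) (fun j => by linarith [hβ j]) ?_ φ
    intro z
    have hz1 := parseval_normSq hu z
    have hz2 := parseval_normSq hvc z
    have e1 : ∑ k, (α k + t) * normSq (ip u z k)
        = (∑ k, α k * normSq (ip u z k)) + t * ∑ y, normSq (z y) := by
      rw [← hz1, Finset.mul_sum, ← Finset.sum_add_distrib]
      exact Finset.sum_congr rfl fun k _ => by ring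
    have e2 : ∑ j, (β j + t) * normSq (ip v z j)
        = (∑ j, β j * normSq (ip v z j)) + t * ∑ y, normSq (z y) := by
      rw [← hz2, Finset.mul_sum, ← Finset.sum_add_distrib]
      exact Finset.sum_congr rfl fun j _ => by ring
    rw [e1, e2]
    exact add_le_add_left (hform z) _
  -- main bound for every T > 0
  have main : ∀ T : ℝ, 0 < T →
      (∑ k, c k * Real.log (α k)) - (∑ j, d j * Real.log (β j)) ≤ (∑ k, c k * α k) / T := by
    intro T hT
    have derivu : ∀ t ∈ Set.uIcc (0:ℝ) T,
        HasDerivAt (fun t => ∑ k, c k * Real.log (α k + t)) (∑ k, c k * (α k + t)⁻¹) t := by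
      intro t ht
      rw [Set.uIcc_of_le hT.le] at ht
      refine HasDerivAt.fun_sum fun k _ => ?_
      have h1 : HasDerivAt (fun t : ℝ => α k + t) 1 t := (hasDerivAt_id t).const_add (α k)
      have hne : α k + t ≠ 0 := by have := hα k; have := ht.1; positivity
      simpa [one_div] using (h1.log hne).const_mul (c k)
    have derivv : ∀ t ∈ Set.uIcc (0:ℝ) T,
        HasDerivAt (fun t => ∑ j, d j * Real.log (β j + t)) (∑ j, d j * (β j + t)⁻¹) t := by
      intro t ht
      rw [Set.uIcc_of_le hT.le] at ht
      refine HasDerivAt.fun_sum fun j _ => ?_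
      have h1 : HasDerivAt (fun t : ℝ => β j + t) 1 t := (hasDerivAt_id t).const_add (β j)
      have hne : β j + t ≠ 0 := by have := hβ j; have := ht.1; positivity
      simpa [one_div] using (h1.log hne).const_mul (d j)
    have intu : IntervalIntegrable (fun t => ∑ k, c k * (α k + t)⁻¹) MeasureTheory.volume 0 T := by
      apply ContinuousOn.intervalIntegrable
      refine continuousOn_finset_sum _ fun k _ => ContinuousOn.mul continuousOn_const ?_
      refine ContinuousOn.inv₀ ((continuousOn_const).add (continuousOn_id)) ?_
      intro t ht
      rw [Set.uIcc_of_le hT.le] at ht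
      have := hα k; have := ht.1; positivity
    have intv : IntervalIntegrable (fun t => ∑ j, d j * (β j + t)⁻¹) MeasureTheory.volume 0 T := by
      apply ContinuousOn.intervalIntegrable
      refine continuousOn_finset_sum _ fun j _ => ContinuousOn.mul continuousOn_const ?_
      refine ContinuousOn.inv₀ ((continuousOn_const).add (continuousOn_id)) ?_
      intro t ht
      rw [Set.uIcc_of_le hT.le] at ht
      have := hβ j; have := ht.1; positivity
    have hftcu := intervalIntegral.integral_eq_sub_of_hasDerivAt derivu intu
    have hftcv := intervalIntegral.integral_eq_sub_of_hasDerivAt derivv intv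
    have hmono : (∫ t in (0:ℝ)..T, ∑ j, d j * (β j + t)⁻¹)
        ≤ ∫ t in (0:ℝ)..T, ∑ k, c k * (α k + t)⁻¹ := by
      refine intervalIntegral.integral_mono_on hT.le intv intu ?_
      intro t ht
      have h := hpt t ht.1
      calc ∑ j, d j * (β j + t)⁻¹ = ∑ j, d j / (β j + t) := by
            exact Finset.sum_congr rfl fun j _ => (div_eq_mul_inv _ _).symm
        _ ≤ ∑ k, c k / (α k + t) := h
        _ = ∑ k, c k * (α k + t)⁻¹ := Finset.sum_congr rfl fun k _ => div_eq_mul_inv _ _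
    rw [hftcu, hftcv] at hmono
    simp only [add_zero] at hmono
    -- bound the tails
    have tailu : ∑ k, c k * Real.log (α k + T) ≤ Real.log T + (∑ k, c k * α k) / T := by
      have e : ∀ k, c k * Real.log (α k + T) = c k * Real.log T + c k * Real.log ((α k + T)/T) := by
        intro k
        rw [Real.log_div (by have := hα k; positivity) hT.ne', mul_sub]
        ring
      rw [Finset.sum_congr rfl fun k _ => e k, Finset.sum_add_distrib, ← Finset.sum_mul, hc1,
        one_mul, Finset.sum_div]
      refine add_le_add_right (Finset.sum_le_sum fun k _ => ?_) _
      have h1 : Real.log ((α k + T)/T) ≤ (α k + T)/T - 1 :=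
        Real.log_le_sub_one_of_pos (by have := hα k; positivity)
      have h2 : (α k + T)/T - 1 = α k / T := by field_simp; ring
      calc c k * Real.log ((α k + T)/T) ≤ c k * (α k / T) := by
            refine mul_le_mul_of_nonneg_left ?_ (hcnn k); rw [← h2]; exact h1
        _ = c k * α k / T := by ring
    have tailv : Real.log T ≤ ∑ j, d j * Real.log (β j + T) := by
      calc Real.log T = ∑ j, d j * Real.log T := by rw [← Finset.sum_mul, hd1, one_mul]
        _ ≤ ∑ j, d j * Real.log (β j + T) := by
            refine Finset.sum_le_sum fun j _ => mul_le_mul_of_nonneg_left ?_ (hdnn j)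
            refine Real.log_le_log hT ?_
            linarith [hβ j]
    linarith
  -- conclude
  by_contra hcon
  push_neg at hcon
  set L := (∑ k, c k * Real.log (α k)) - (∑ j, d j * Real.log (β j)) with hL
  have hL0 : 0 < L := by rw [hL]; linarith
  set K := ∑ k, c k * α k with hK
  have hK0 : 0 ≤ K := Finset.sum_nonneg fun k _ => mul_nonneg (hcnn k) (hα k).le
  have hT0 : 0 < 2 * (K + 1) / L := by positivity
  have h2 : L ≤ K * L / (2 * (K + 1)) := by
    calc L ≤ K / (2 * (K + 1) / L) := main _ hT0
      _ = K * L / (2 * (K + 1)) := by field_simp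
  rw [le_div_iff₀ (by positivity : (0:ℝ) < 2 * (K + 1))] at h2
  nlinarith

/-- the standard "basis" system -/
def stdb (Y : Type*) [Fintype Y] : Y → Y → ℂ := fun y0 y => if y0 = y then 1 else 0

lemma stdb_ortho : Ortho (stdb Y) := by
  intro k k'
  simp [stdb, Ortho, apply_ite (starRingEnd ℂ)]

lemma stdb_complete : Complete (stdb Y) := by
  intro y y'
  simp only [stdb, Complete, apply_ite (starRingEnd ℂ), _root_.map_one, _root_.map_zero, ite_mul, one_mul,
    zero_mul]
  rw [Finset.sum_ite_eq' univ y (fun y0 => if y0 = y' then (1:ℂ) else 0)]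
  simp

lemma ip_stdb (z : Y → ℂ) (y0 : Y) : ip (stdb Y) z y0 = z y0 := by
  simp [ip, stdb, apply_ite (starRingEnd ℂ)]

lemma reconstruct {u : ι → Y → ℂ} (hu : Complete u) (φ : Y → ℂ) (y : Y) :
    ∑ k, ip u φ k * u k y = φ y := by
  have : ∀ k, ip u φ k * u k y = ∑ y', (u k y * (starRingEnd ℂ) (u k y')) * φ y' := by
    intro k
    rw [ip, Finset.sum_mul]
    exact Finset.sum_congr rfl fun y' _ => by ring
  rw [Finset.sum_congr rfl fun k _ => this k, Finset.sum_comm]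
  have : ∀ y', ∑ k, (u k y * (starRingEnd ℂ) (u k y')) * φ y'
      = (if y = y' then 1 else 0) * φ y' := by
    intro y'
    rw [← hu y y', Finset.sum_mul]
  rw [Finset.sum_congr rfl fun y' _ => this y']
  simp



lemma key_ineq {u : ι → Y → ℂ} (hu : Complete u)
    {lam : ι → ℝ} (hlam : ∀ k, 0 ≤ lam k)
    (φ : Y → ℂ) (hφ : ∑ y, normSq (φ y) = 1)
    (hker : ∀ k, lam k = 0 → ip u φ k = 0) :
    ∑ y, normSq (φ y) * Real.log (normSq (φ y) / (∑ k, lam k * normSq (u k y)))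
      ≤ -∑ k, normSq (ip u φ k) * Real.log (lam k) := by
  set v : Y → ℝ := fun y => normSq (φ y) with hv
  set q : Y → ℝ := fun y => ∑ k, lam k * normSq (u k y) with hq
  have hvnn : ∀ y, 0 ≤ v y := fun y => normSq_nonneg _
  have hqnn : ∀ y, 0 ≤ q y :=
    fun y => Finset.sum_nonneg fun k _ => mul_nonneg (hlam k) (normSq_nonneg _)
  have hqpos : ∀ y, v y ≠ 0 → 0 < q y := by
    intro y hvy
    rcases lt_or_eq_of_le (hqnn y) with h | h
    · exact h
    · exfalso
      have hterm : ∀ k, lam k * normSq (u k y) = 0 := by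
        intro k
        have h2 := (Finset.sum_eq_zero_iff_of_nonneg
          (fun k (_ : k ∈ univ) => mul_nonneg (hlam k) (normSq_nonneg (u k y)))).mp h.symm
        exact h2 k (Finset.mem_univ k)
      have hphi : φ y = 0 := by
        rw [← reconstruct hu φ y]
        refine Finset.sum_eq_zero fun k _ => ?_
        rcases eq_or_lt_of_le (hlam k) with h0 | h0
        · rw [hker k h0.symm, zero_mul]
        · have h3 : normSq (u k y) = 0 := by
            rcases mul_eq_zero.mp (hterm k) with h4 | h4
            · exact absurd h4.symm h0.ne
            · exact h4
          rw [Complex.normSq_eq_zero.mp h3, mul_zero]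
      exact hvy (by rw [hv]; simp [hphi])
  set X := (∑ y, v y * Real.log (v y / q y)) + ∑ k, normSq (ip u φ k) * Real.log (lam k)
    with hX
  suffices hXle : X ≤ 0 by rw [hX] at hXle; linarith
  set A := ∑ y, (if v y = 0 then 0 else v y / q y) with hA
  set Bq := ∑ y, (if v y = 0 then q y else 0) with hB
  have hA0 : 0 ≤ A := Finset.sum_nonneg fun y _ => by
    split_ifs with h
    · exact le_refl 0
    · exact div_nonneg (hvnn y) (hqnn y)
  have hB0 : 0 ≤ Bq := Finset.sum_nonneg fun y _ => by
    split_ifs with h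
    · exact hqnn y
    · exact le_refl 0
  set N := (Fintype.card Y : ℝ) with hN
  have hN0 : 0 ≤ N := by rw [hN]; positivity
  have key : ∀ ε : ℝ, 0 < ε → ∀ τ : ℝ, 0 < τ → X ≤ ε * A + τ * (Bq + ε * N) := by
    intro ε hε τ hτ
    set w : Y → ℝ := fun y => if v y = 0 then τ else v y / q y with hw
    have hwpos : ∀ y, 0 < w y := by
      intro y; rw [hw]; dsimp only; split_ifs with h
      · exact hτ
      · exact div_pos (lt_of_le_of_ne (hvnn y) (Ne.symm h)) (hqpos y h)
    set μ := ∑ y, (q y + ε) * w y with hμ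
    set Bε := ∑ y, (if v y = 0 then q y + ε else 0) with hBε
    have hBε0 : 0 ≤ Bε := Finset.sum_nonneg fun y _ => by
      split_ifs with h
      · have := hqnn y; linarith
      · exact le_refl 0
    have hμ_eq : μ = 1 + ε * A + τ * Bε := by
      have per : ∀ y, (q y + ε) * w y
          = (if v y = 0 then 0 else v y) + ε * (if v y = 0 then 0 else v y / q y)
            + τ * (if v y = 0 then q y + ε else 0) := by
        intro y
        rw [hw]; dsimp only; split_ifs with h
        · ring
        · have hq0 : q y ≠ 0 := (hqpos y h).ne'
          field_simp
          ring
      rw [hμ, Finset.sum_congr rfl fun y _ => per y]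
      rw [Finset.sum_add_distrib, Finset.sum_add_distrib, ← Finset.mul_sum, ← Finset.mul_sum]
      have h1 : ∑ y, (if v y = 0 then 0 else v y) = 1 := by
        rw [show ∑ y, (if v y = 0 then 0 else v y) = ∑ y, v y from
          Finset.sum_congr rfl fun y _ => by by_cases h : v y = 0 <;> simp [h]]
        exact hφ
      rw [h1, ← hA, ← hBε]
    have hμpos : 0 < μ := by
      rw [hμ_eq]; nlinarith [mul_nonneg hε.le hA0, mul_nonneg hτ.le hBε0]
    have hform : ∀ z : Y → ℂ, ∑ k, (lam k + ε) * normSq (ip u z k)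
        ≤ ∑ y, (μ / w y) * normSq (ip (stdb Y) z y) := by
      intro z
      set S := ∑ y, normSq (z y) / w y with hS
      have hS0 : 0 ≤ S := Finset.sum_nonneg fun y _ =>
        div_nonneg (normSq_nonneg _) (hwpos y).le
      have hrhs : ∑ y, (μ / w y) * normSq (ip (stdb Y) z y) = μ * S := by
        rw [hS, Finset.mul_sum]
        refine Finset.sum_congr rfl fun y _ => ?_
        rw [ip_stdb]
        ring
      have hCS : ∀ k, normSq (ip u z k) ≤ (∑ y, normSq (u k y) * w y) * S := by
        intro k
        have h1 : ‖ip u z k‖ ≤ ∑ y, ‖u k y‖ * ‖z y‖ := by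
          calc ‖ip u z k‖ ≤ ∑ y, ‖(starRingEnd ℂ) (u k y) * z y‖ :=
              norm_sum_le _ _
            _ = ∑ y, ‖u k y‖ * ‖z y‖ := by
              refine Finset.sum_congr rfl fun y _ => ?_
              rw [norm_mul, Complex.norm_conj]
        have h2 : (∑ y, ‖u k y‖ * ‖z y‖)^2
            ≤ (∑ y, normSq (u k y) * w y) * S := by
          have hcs := Finset.sum_mul_sq_le_sq_mul_sq univ
            (fun y => ‖u k y‖ * Real.sqrt (w y))
            (fun y => ‖z y‖ / Real.sqrt (w y))
          have e1 : ∀ y : Y, (‖u k y‖ * Real.sqrt (w y))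
              * (‖z y‖ / Real.sqrt (w y))
              = ‖u k y‖ * ‖z y‖ := by
            intro y
            have hsne : Real.sqrt (w y) ≠ 0 := by
              have := Real.sqrt_pos.mpr (hwpos y); linarith
            field_simp
          have e2 : ∀ y : Y, (‖u k y‖ * Real.sqrt (w y))^2
              = normSq (u k y) * w y := by
            intro y; rw [mul_pow, Real.sq_sqrt (hwpos y).le, Complex.sq_norm]
          have e3 : ∀ y : Y, (‖z y‖ / Real.sqrt (w y))^2 = normSq (z y) / w y := by
            intro y; rw [div_pow, Real.sq_sqrt (hwpos y).le, Complex.sq_norm]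
          rw [Finset.sum_congr rfl fun y _ => e1 y, Finset.sum_congr rfl fun y _ => e2 y,
            Finset.sum_congr rfl fun y _ => e3 y] at hcs
          rw [hS]
          exact hcs
        calc normSq (ip u z k) = ‖ip u z k‖^2 := (Complex.sq_norm _).symm
          _ ≤ (∑ y, ‖u k y‖ * ‖z y‖)^2 :=
              pow_le_pow_left₀ (norm_nonneg _) h1 2
          _ ≤ _ := h2
      have hswap : ∑ k, lam k * ((∑ y, normSq (u k y) * w y) * S)
          = (∑ y, q y * w y) * S := by
        calc ∑ k, lam k * ((∑ y, normSq (u k y) * w y) * S)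
            = (∑ k, lam k * ∑ y, normSq (u k y) * w y) * S := by
              rw [Finset.sum_mul]
              exact Finset.sum_congr rfl fun k _ => by ring
          _ = (∑ y, q y * w y) * S := by
              congr 1
              calc ∑ k, lam k * ∑ y, normSq (u k y) * w y
                  = ∑ k, ∑ y, lam k * normSq (u k y) * w y := by
                    refine Finset.sum_congr rfl fun k _ => ?_
                    rw [Finset.mul_sum]
                    exact Finset.sum_congr rfl fun y _ => by ring
                _ = ∑ y, ∑ k, lam k * normSq (u k y) * w y := Finset.sum_comm
                _ = ∑ y, q y * w y := by
                    refine Finset.sum_congr rfl fun y _ => ?_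
                    rw [hq]
                    dsimp only
                    rw [Finset.sum_mul]
      have hzsum : ∑ y, normSq (z y) ≤ (∑ y, w y) * S := by
        calc ∑ y, normSq (z y) = ∑ y, w y * (normSq (z y) / w y) := by
              refine Finset.sum_congr rfl fun y _ => ?_
              field_simp [(hwpos y).ne']
          _ ≤ ∑ y, (∑ y', w y') * (normSq (z y) / w y) := by
              refine Finset.sum_le_sum fun y _ => ?_
              refine mul_le_mul_of_nonneg_right ?_
                (div_nonneg (normSq_nonneg _) (hwpos y).le)
              exact Finset.single_le_sum (fun y' _ => (hwpos y').le) (Finset.mem_univ y)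
          _ = (∑ y', w y') * S := by rw [hS, ← Finset.mul_sum]
      have hμsplit : μ = (∑ y, q y * w y) + ε * ∑ y, w y := by
        rw [hμ, Finset.mul_sum, ← Finset.sum_add_distrib]
        exact Finset.sum_congr rfl fun y _ => by ring
      calc ∑ k, (lam k + ε) * normSq (ip u z k)
          = (∑ k, lam k * normSq (ip u z k)) + ε * ∑ k, normSq (ip u z k) := by
            rw [Finset.mul_sum, ← Finset.sum_add_distrib]
            exact Finset.sum_congr rfl fun k _ => by ring
        _ ≤ (∑ k, lam k * ((∑ y, normSq (u k y) * w y) * S)) + ε * ∑ y, normSq (z y) := by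
            refine add_le_add (Finset.sum_le_sum fun k _ =>
              mul_le_mul_of_nonneg_left (hCS k) (hlam k)) ?_
            rw [parseval_normSq hu z]
        _ ≤ (∑ y, q y * w y) * S + ε * ((∑ y, w y) * S) := by
            rw [hswap]
            exact add_le_add_right (mul_le_mul_of_nonneg_left hzsum hε.le) _
        _ = μ * S := by rw [hμsplit]; ring
        _ = ∑ y, (μ / w y) * normSq (ip (stdb Y) z y) := hrhs.symm
    have hlog := log_form_mono hu stdb_ortho stdb_complete
      (fun k => by have := hlam k; linarith)
      (fun y => div_pos hμpos (hwpos y)) φ hφ hform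
    have hlow : ∑ k, normSq (ip u φ k) * Real.log (lam k)
        ≤ ∑ k, normSq (ip u φ k) * Real.log (lam k + ε) := by
      refine Finset.sum_le_sum fun k _ => ?_
      rcases eq_or_lt_of_le (hlam k) with h0 | h0
      · rw [hker k h0.symm]
        simp
      · exact mul_le_mul_of_nonneg_left (Real.log_le_log h0 (by linarith)) (normSq_nonneg _)
    have hrhs2 : ∑ y, normSq (ip (stdb Y) φ y) * Real.log (μ / w y)
        = Real.log μ - ∑ y, v y * Real.log (w y) := by
      have per : ∀ y : Y, normSq (ip (stdb Y) φ y) * Real.log (μ / w y)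
          = v y * Real.log μ - v y * Real.log (w y) := by
        intro y
        rw [ip_stdb, Real.log_div hμpos.ne' (hwpos y).ne']
        rw [hv]
        ring
      rw [Finset.sum_congr rfl fun y _ => per y, Finset.sum_sub_distrib, ← Finset.sum_mul, hφ,
        one_mul]
    have hwv : ∑ y, v y * Real.log (w y) = ∑ y, v y * Real.log (v y / q y) := by
      refine Finset.sum_congr rfl fun y _ => ?_
      rw [hw]
      dsimp only
      split_ifs with h
      · rw [h, zero_mul, zero_mul]
      · rfl
    have hXlog : X ≤ Real.log μ := by
      rw [hrhs2, hwv] at hlog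
      rw [hX]
      linarith [hlow, hlog]
    have hlogμ : Real.log μ ≤ μ - 1 := Real.log_le_sub_one_of_pos hμpos
    have hBεB : Bε ≤ Bq + ε * N := by
      rw [hBε, hB, hN]
      calc ∑ y, (if v y = 0 then q y + ε else 0)
          ≤ ∑ y, ((if v y = 0 then q y else 0) + ε) := by
            refine Finset.sum_le_sum fun y _ => ?_
            split_ifs with h
            · exact le_refl _
            · linarith
        _ = (∑ y, (if v y = 0 then q y else 0)) + (Fintype.card Y : ℝ) * ε := by
            rw [Finset.sum_add_distrib, Finset.sum_const, Finset.card_univ, nsmul_eq_mul]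
        _ = _ := by ring
    calc X ≤ Real.log μ := hXlog
      _ ≤ μ - 1 := hlogμ
      _ = ε * A + τ * Bε := by rw [hμ_eq]; ring
      _ ≤ ε * A + τ * (Bq + ε * N) := by nlinarith [hBεB, hτ]
  -- conclude X ≤ 0 from the family of bounds
  by_contra hcon
  push_neg at hcon
  set ε := min 1 (X / (4 * (A + 1))) with hε
  have hε0 : 0 < ε := lt_min one_pos (by positivity)
  set τ := X / (4 * (Bq + N + 1)) with hτdef
  have hτ0 : 0 < τ := by rw [hτdef]; positivity
  have hbound := key ε hε0 τ hτ0
  have h1 : ε * A ≤ X / 4 := by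
    have h2 : ε ≤ X / (4 * (A + 1)) := min_le_right _ _
    have h3 : ε * A ≤ X / (4 * (A + 1)) * A := mul_le_mul_of_nonneg_right h2 hA0
    have h4 : X / (4 * (A + 1)) * A ≤ X / 4 := by
      rw [div_mul_eq_mul_div, div_le_div_iff₀ (by positivity) (by norm_num)]
      nlinarith
    linarith
  have h5 : τ * (Bq + ε * N) ≤ X / 4 := by
    have h6 : Bq + ε * N ≤ Bq + N := by
      have : ε ≤ 1 := min_le_left _ _
      nlinarith
    have h7 : τ * (Bq + ε * N) ≤ τ * (Bq + N) := by
      refine mul_le_mul_of_nonneg_left h6 hτ0.le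
    have h8 : τ * (Bq + N) ≤ X / 4 := by
      rw [hτdef, div_mul_eq_mul_div, div_le_div_iff₀ (by positivity) (by norm_num)]
      nlinarith
    linarith
  clear_value X A Bq N ε τ
  linarith [hbound, h1, h5, hcon]

lemma tri_sum {X : Type*} [Fintype X] (ψ : X → Y → ℂ) (a b : Y → ℂ) :
    ∑ y, ∑ y', (a y * (∑ x, ψ x y * (starRingEnd ℂ) (ψ x y'))) * b y'
      = ∑ x, (∑ y, a y * ψ x y) * (∑ y', (starRingEnd ℂ) (ψ x y') * b y') := by
  have e1 : ∀ y y', (a y * (∑ x, ψ x y * (starRingEnd ℂ) (ψ x y'))) * b y'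
      = ∑ x, (a y * ψ x y) * ((starRingEnd ℂ) (ψ x y') * b y') := by
    intro y y'
    rw [Finset.mul_sum, Finset.sum_mul]
    exact Finset.sum_congr rfl fun x _ => by ring
  calc ∑ y, ∑ y', (a y * (∑ x, ψ x y * (starRingEnd ℂ) (ψ x y'))) * b y'
      = ∑ y, ∑ y', ∑ x, (a y * ψ x y) * ((starRingEnd ℂ) (ψ x y') * b y') := by
        exact Finset.sum_congr rfl fun y _ => Finset.sum_congr rfl fun y' _ => e1 y y'
    _ = ∑ y, ∑ x, ∑ y', (a y * ψ x y) * ((starRingEnd ℂ) (ψ x y') * b y') :=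
        Finset.sum_congr rfl fun y _ => Finset.sum_comm
    _ = ∑ x, ∑ y, ∑ y', (a y * ψ x y) * ((starRingEnd ℂ) (ψ x y') * b y') :=
        Finset.sum_comm
    _ = ∑ x, (∑ y, a y * ψ x y) * (∑ y', (starRingEnd ℂ) (ψ x y') * b y') := by
        refine Finset.sum_congr rfl fun x _ => ?_
        rw [Finset.sum_mul_sum]

end LeakAux

section LeakMain
open LeakAux

lemma mainB {X Y : Type*} [Fintype X] [Fintype Y]
    (P : X × Y → ℝ) (hP0 : ∀ xy, 0 ≤ P xy) (hP1 : ∑ xy, P xy = 1) (θ : X × Y → ℝ) :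
    mutualInfo P ≤ vNE (rhoB P θ) := by
  classical
  set ψ : X × Y → ℂ := regEmb P θ with hψdef
  have hψ : ∀ xy, normSq (ψ xy) = P xy := by
    intro xy
    rw [hψdef, regEmb, Complex.normSq_mul, Complex.normSq_ofReal,
      Real.mul_self_sqrt (hP0 xy)]
    have h1 : normSq (Complex.exp (Complex.I * (θ xy : ℂ))) = 1 := by
      rw [Complex.normSq_eq_norm_sq, Complex.norm_exp]
      simp
    rw [h1, one_mul]
  set ρ : Matrix Y Y ℂ := rhoB P θ with hρdef
  have hρ : ∀ y y', ρ y y' = ∑ x, ψ (x,y) * (starRingEnd ℂ) (ψ (x,y')) := by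
    intro y y'
    rfl
  have hherm : ρ.IsHermitian := by
    refine Matrix.IsHermitian.ext fun y y' => ?_
    rw [hρ, hρ, star_sum]
    refine Finset.sum_congr rfl fun x _ => ?_
    rw [star_mul']
    simp [Complex.star_def, mul_comm]
  set lam := hherm.eigenvalues with hlamdef
  set U : Matrix Y Y ℂ := (hherm.eigenvectorUnitary : Matrix Y Y ℂ) with hUdef
  have hU1 : star U * U = 1 := Matrix.mem_unitaryGroup_iff'.mp hherm.eigenvectorUnitary.2
  have hU2 : U * star U = 1 := Matrix.mem_unitaryGroup_iff.mp hherm.eigenvectorUnitary.2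
  set u : Y → Y → ℂ := fun k y => U y k with hudef
  have huo : Ortho u := by
    intro k k'
    have h := congrFun (congrFun hU1 k) k'
    rw [Matrix.mul_apply, Matrix.one_apply] at h
    calc ∑ y, (starRingEnd ℂ) (u k y) * u k' y
        = ∑ y, (star U) k y * U y k' := by
          refine Finset.sum_congr rfl fun y _ => ?_
          rw [hudef, Matrix.star_apply, Complex.star_def]
      _ = if k = k' then 1 else 0 := h
  have huc : Complete u := by
    intro y y'
    have h := congrFun (congrFun hU2 y) y'
    rw [Matrix.mul_apply, Matrix.one_apply] at h
    calc ∑ k, u k y * (starRingEnd ℂ) (u k y')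
        = ∑ k, U y k * (star U) k y' := by
          refine Finset.sum_congr rfl fun k _ => ?_
          rw [hudef, Matrix.star_apply, Complex.star_def]
      _ = if y = y' then 1 else 0 := h
  -- positive semidefiniteness
  have hPSD : ρ.PosSemidef := by
    refine Matrix.PosSemidef.of_dotProduct_mulVec_nonneg hherm fun z => ?_
    have hform : dotProduct (star z) (ρ *ᵥ z)
        = ∑ x, ((∑ y, (starRingEnd ℂ) (z y) * ψ (x,y))
            * (∑ y', (starRingEnd ℂ) (ψ (x,y')) * z y')) := by
      rw [dotProduct]
      calc ∑ y, (star z) y * (ρ *ᵥ z) y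
          = ∑ y, ∑ y', ((starRingEnd ℂ) (z y) * ρ y y') * z y' := by
            refine Finset.sum_congr rfl fun y _ => ?_
            rw [Matrix.mulVec, dotProduct, Finset.mul_sum]
            refine Finset.sum_congr rfl fun y' _ => ?_
            rw [Pi.star_apply, Complex.star_def]
            ring
        _ = ∑ x, ((∑ y, (starRingEnd ℂ) (z y) * ψ (x,y))
            * (∑ y', (starRingEnd ℂ) (ψ (x,y')) * z y')) := by
            simp only [hρ]
            exact tri_sum (fun x y => ψ (x,y)) (fun y => (starRingEnd ℂ) (z y)) z
    rw [hform]
    have hconj : ∀ x, (∑ y, (starRingEnd ℂ) (z y) * ψ (x,y))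
        = (starRingEnd ℂ) (∑ y', (starRingEnd ℂ) (ψ (x,y')) * z y') := by
      intro x
      rw [_root_.map_sum]
      refine Finset.sum_congr rfl fun y _ => ?_
      rw [_root_.map_mul, Complex.conj_conj, mul_comm]
    calc (0:ℂ) ≤ ((∑ x, normSq (∑ y', (starRingEnd ℂ) (ψ (x,y')) * z y') : ℝ) : ℂ) := by
          rw [Complex.zero_le_real]
          exact Finset.sum_nonneg fun x _ => normSq_nonneg _
      _ = ∑ x, ((∑ y, (starRingEnd ℂ) (z y) * ψ (x,y))
            * (∑ y', (starRingEnd ℂ) (ψ (x,y')) * z y')) := by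
          push_cast
          refine Finset.sum_congr rfl fun x _ => ?_
          rw [hconj x, ← Complex.normSq_eq_conj_mul_self]
  have hlamnn : ∀ k, 0 ≤ lam k := fun k => hPSD.eigenvalues_nonneg k
  -- the coefficients of each row of ψ in the eigenbasis
  set c : X → Y → ℂ := fun x k => ip u (fun y => ψ (x,y)) k with hcdef
  have hc : ∀ x k, c x k = ∑ y, (starRingEnd ℂ) (U y k) * ψ (x,y) := by
    intro x k
    rfl
  have hsum_c : ∀ k, ∑ x, normSq (c x k) = lam k := by
    intro k
    have hdiag := hherm.conjStarAlgAut_star_eigenvectorUnitary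
    rw [Unitary.conjStarAlgAut_star_apply, ← hUdef] at hdiag
    have h := congrFun (congrFun hdiag k) k
    have hL : (star U * ρ * U) k k
        = ∑ y, ∑ y', ((starRingEnd ℂ) (U y k) * ρ y y') * U y' k := by
      rw [Matrix.mul_apply]
      calc ∑ y', (star U * ρ) k y' * U y' k
          = ∑ y', (∑ y, (starRingEnd ℂ) (U y k) * ρ y y') * U y' k := by
            refine Finset.sum_congr rfl fun y' _ => ?_
            rw [Matrix.mul_apply]
            simp only [Matrix.star_apply, Complex.star_def]
        _ = ∑ y', ∑ y, ((starRingEnd ℂ) (U y k) * ρ y y') * U y' k := by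
            refine Finset.sum_congr rfl fun y' _ => ?_
            rw [Finset.sum_mul]
        _ = ∑ y, ∑ y', ((starRingEnd ℂ) (U y k) * ρ y y') * U y' k := Finset.sum_comm
    have hR : (star U * ρ * U) k k = ((∑ x, normSq (c x k) : ℝ) : ℂ) := by
      rw [hL]
      simp only [hρ]
      rw [tri_sum (fun x y => ψ (x,y)) (fun y => (starRingEnd ℂ) (U y k)) (fun y' => U y' k)]
      push_cast
      refine Finset.sum_congr rfl fun x _ => ?_
      have h1 : (∑ y', (starRingEnd ℂ) (ψ (x,y')) * U y' k) = (starRingEnd ℂ) (c x k) := by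
        rw [hc, _root_.map_sum]
        refine Finset.sum_congr rfl fun y _ => ?_
        rw [_root_.map_mul, Complex.conj_conj, mul_comm]
      rw [h1, ← hc, Complex.mul_conj]
    rw [hR] at h
    rw [Matrix.diagonal_apply_eq] at h
    have h2 := h.trans (show ((RCLike.ofReal ∘ lam) k : ℂ) = ((lam k : ℝ) : ℂ) from rfl)
    exact_mod_cast h2
  have hparx : ∀ x, ∑ k, normSq (c x k) = margX P x := by
    intro x
    rw [hcdef]
    have := parseval_normSq huc (fun y => ψ (x,y))
    rw [this, margX]
    exact Finset.sum_congr rfl fun y _ => hψ (x,y)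
  have hqmarg : ∀ y, (∑ k, lam k * normSq (u k y)) = margY P y := by
    intro y
    have h1 : ρ y y = ((margY P y : ℝ) : ℂ) := by
      rw [hρ, margY]
      push_cast
      refine Finset.sum_congr rfl fun x _ => ?_
      rw [Complex.mul_conj, hψ]
    have h2 : ρ y y = ((∑ k, lam k * normSq (u k y) : ℝ) : ℂ) := by
      have hst := hherm.spectral_theorem
      rw [Unitary.conjStarAlgAut_apply] at hst
      have h := congrFun (congrFun hst y) y
      rw [← hUdef, ← hlamdef, Matrix.mul_apply] at h
      rw [h]
      push_cast
      refine Finset.sum_congr rfl fun k _ => ?_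
      rw [Matrix.mul_diagonal, Matrix.star_apply, Complex.star_def]
      rw [show (U y k * (RCLike.ofReal ∘ lam) k) * (starRingEnd ℂ) (U y k)
          = (RCLike.ofReal ∘ lam) k * (U y k * (starRingEnd ℂ) (U y k)) from by ring]
      rw [Complex.mul_conj]
      rw [show ((RCLike.ofReal ∘ lam) k : ℂ) = ((lam k : ℝ) : ℂ) from rfl]
    have := h1.symm.trans h2
    exact_mod_cast this.symm
  -- per-row inequality
  have hrow : ∀ x, ∑ y, P (x,y) * Real.log (P (x,y) / (margX P x * margY P y))
      ≤ -∑ k, normSq (c x k) * Real.log (lam k) := by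
    intro x
    rcases eq_or_lt_of_le (Finset.sum_nonneg fun y (_ : y ∈ univ) => hP0 (x,y)) with hp | hp
    · -- margX P x = 0
      have hzero : ∀ y, P (x,y) = 0 := by
        intro y
        have := (Finset.sum_eq_zero_iff_of_nonneg
          (fun y (_ : y ∈ univ) => hP0 (x,y))).mp hp.symm
        exact this y (Finset.mem_univ y)
      have hczero : ∀ k, normSq (c x k) = 0 := by
        intro k
        have h0 : ∑ k, normSq (c x k) = 0 := by
          rw [hparx x, margX]
          exact Finset.sum_eq_zero fun y _ => hzero y
        have := (Finset.sum_eq_zero_iff_of_nonneg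
          (fun k (_ : k ∈ univ) => normSq_nonneg (c x k))).mp h0
        exact this k (Finset.mem_univ k)
      rw [Finset.sum_eq_zero fun y _ => by rw [hzero y, zero_mul],
        Finset.sum_eq_zero fun k _ => by rw [hczero k, zero_mul]]
      simp
    · -- margX P x > 0
      set p := margX P x with hpdef
      have hpne : p ≠ 0 := by
        rw [hpdef, margX]
        exact hp.ne'
      set φ : Y → ℂ := fun y => (((Real.sqrt p)⁻¹ : ℝ) : ℂ) * ψ (x,y) with hφdef
      have hsp : Real.sqrt p > 0 := Real.sqrt_pos.mpr (by rw [hpdef, margX]; exact hp)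
      have hφn : ∀ y, normSq (φ y) = P (x,y) / p := by
        intro y
        rw [hφdef]
        dsimp only
        rw [Complex.normSq_mul, Complex.normSq_ofReal, hψ, ← Real.sqrt_inv,
          Real.mul_self_sqrt (inv_nonneg.mpr (by rw [hpdef, margX]; exact hp.le))]
        rw [div_eq_inv_mul]
      have hφ1 : ∑ y, normSq (φ y) = 1 := by
        rw [Finset.sum_congr rfl fun y _ => hφn y, ← Finset.sum_div]
        rw [hpdef, margX]
        exact div_self (by rw [hpdef, margX] at hpne; exact hpne)
      have hipφ : ∀ k, ip u φ k = (((Real.sqrt p)⁻¹ : ℝ) : ℂ) * c x k := by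
        intro k
        rw [ip, hc, Finset.mul_sum]
        refine Finset.sum_congr rfl fun y _ => ?_
        rw [hφdef]
        dsimp only
        rw [hudef]
        ring
      have hnsip : ∀ k, normSq (ip u φ k) = normSq (c x k) / p := by
        intro k
        rw [hipφ k, Complex.normSq_mul, Complex.normSq_ofReal, ← Real.sqrt_inv,
          Real.mul_self_sqrt (inv_nonneg.mpr (by rw [hpdef, margX]; exact hp.le)),
          div_eq_inv_mul]
      have hker : ∀ k, lam k = 0 → ip u φ k = 0 := by
        intro k hk
        have h0 : ∑ x', normSq (c x' k) = 0 := by rw [hsum_c k, hk]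
        have hc0 : normSq (c x k) = 0 := by
          have := (Finset.sum_eq_zero_iff_of_nonneg
            (fun x' (_ : x' ∈ univ) => normSq_nonneg (c x' k))).mp h0
          exact this x (Finset.mem_univ x)
        rw [hipφ k, Complex.normSq_eq_zero.mp hc0, mul_zero]
      have hkey := key_ineq huc hlamnn φ hφ1 hker
      -- rewrite q into margY
      have hkey2 : ∑ y, (P (x,y) / p) * Real.log ((P (x,y) / p) / margY P y)
          ≤ -∑ k, (normSq (c x k) / p) * Real.log (lam k) := by
        calc ∑ y, (P (x,y) / p) * Real.log ((P (x,y) / p) / margY P y)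
            = ∑ y, normSq (φ y) * Real.log (normSq (φ y) / (∑ k, lam k * normSq (u k y))) := by
              refine Finset.sum_congr rfl fun y _ => ?_
              rw [hφn y, hqmarg y]
          _ ≤ -∑ k, normSq (ip u φ k) * Real.log (lam k) := hkey
          _ = -∑ k, (normSq (c x k) / p) * Real.log (lam k) := by
              congr 1
              exact Finset.sum_congr rfl fun k _ => by rw [hnsip k]
      have hmul := mul_le_mul_of_nonneg_left hkey2 (le_of_lt hp : (0:ℝ) ≤ p)
      calc ∑ y, P (x,y) * Real.log (P (x,y) / (margX P x * margY P y))
          = p * ∑ y, (P (x,y) / p) * Real.log ((P (x,y) / p) / margY P y) := by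
            rw [Finset.mul_sum]
            refine Finset.sum_congr rfl fun y _ => ?_
            rw [div_div, ← hpdef]
            field_simp
        _ ≤ p * (-∑ k, (normSq (c x k) / p) * Real.log (lam k)) := hmul
        _ = -∑ k, normSq (c x k) * Real.log (lam k) := by
            rw [mul_neg, Finset.mul_sum]
            congr 1
            refine Finset.sum_congr rfl fun k _ => ?_
            field_simp
  -- assembly
  have htotal : ∑ x, ∑ y, P (x,y) * Real.log (P (x,y) / (margX P x * margY P y))
      ≤ -∑ k, lam k * Real.log (lam k) := by
    calc ∑ x, ∑ y, P (x,y) * Real.log (P (x,y) / (margX P x * margY P y))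
        ≤ ∑ x, -∑ k, normSq (c x k) * Real.log (lam k) :=
          Finset.sum_le_sum fun x _ => hrow x
      _ = -∑ x, ∑ k, normSq (c x k) * Real.log (lam k) := by rw [Finset.sum_neg_distrib]
      _ = -∑ k, ∑ x, normSq (c x k) * Real.log (lam k) := by rw [Finset.sum_comm]
      _ = -∑ k, lam k * Real.log (lam k) := by
          congr 1
          refine Finset.sum_congr rfl fun k _ => ?_
          rw [← Finset.sum_mul, hsum_c k]
  -- convert to logb
  have hlog2 : (0:ℝ) < Real.log 2 := Real.log_pos (by norm_num)
  have hMI : mutualInfo P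
      = (∑ x, ∑ y, P (x,y) * Real.log (P (x,y) / (margX P x * margY P y))) / Real.log 2 := by
    rw [mutualInfo, Finset.sum_div]
    refine Finset.sum_congr rfl fun x _ => ?_
    rw [Finset.sum_div]
    refine Finset.sum_congr rfl fun y _ => ?_
    rw [Real.logb, mul_div_assoc]
  have hvne : vNE ρ = (-∑ k, lam k * Real.log (lam k)) / Real.log 2 := by
    rw [vNE, dif_pos hherm, neg_div, Finset.sum_div]
    congr 1
    refine Finset.sum_congr rfl fun k _ => ?_
    rw [Real.logb, mul_div_assoc]
  rw [hMI, hvne]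
  exact (div_le_div_iff_of_pos_right hlog2).mpr htotal

end LeakMain

/-- **Non-negativity of leakage.** For every primitive `P` and every phase
function `θ`, `S(ρ_B(θ)) ≥ I(X;Y)` and `S(ρ_A(θ)) ≥ I(X;Y)`; in particular the leakage
`Δ(ψ_θ)` of every regular embedding is non-negative. -/
theorem leakReg_nonneg
    {𝒳 𝒴 : Type*} [Fintype 𝒳] [Fintype 𝒴] [Nonempty 𝒳] [Nonempty 𝒴]
    (P : 𝒳 × 𝒴 → ℝ) (hP0 : ∀ xy, 0 ≤ P xy) (hP1 : ∑ xy, P xy = 1)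
    (θ : 𝒳 × 𝒴 → ℝ) :
    mutualInfo P ≤ vNE (rhoB P θ) ∧ mutualInfo P ≤ vNE (rhoA P θ) ∧
      0 ≤ leakReg P θ := by
  classical
  have h1 : mutualInfo P ≤ vNE (rhoB P θ) := mainB P hP0 hP1 θ
  set P' : 𝒴 × 𝒳 → ℝ := fun yx => P (yx.2, yx.1) with hP'
  set θ' : 𝒴 × 𝒳 → ℝ := fun yx => θ (yx.2, yx.1) with hθ'
  have hP0' : ∀ yx, 0 ≤ P' yx := fun yx => hP0 _
  have hP1' : ∑ yx, P' yx = 1 := by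
    rw [Fintype.sum_prod_type]
    rw [Finset.sum_comm]
    rw [← Fintype.sum_prod_type]
    exact hP1
  have hRA : rhoA P θ = rhoB P' θ' := rfl
  have hMI : mutualInfo P' = mutualInfo P := by
    rw [mutualInfo, mutualInfo, Finset.sum_comm]
    refine Finset.sum_congr rfl fun x _ => Finset.sum_congr rfl fun y _ => ?_
    have e1 : P' (y, x) = P (x, y) := rfl
    have e2 : margX P' y = margY P y := rfl
    have e3 : margY P' x = margX P x := rfl
    rw [e1, e2, e3, mul_comm (margY P y) (margX P x)]
  have h2 : mutualInfo P ≤ vNE (rhoA P θ) := by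
    rw [hRA, ← hMI]
    exact mainB P' hP0' hP1' θ'
  refine ⟨h1, h2, ?_⟩
  rw [leakReg]
  linarith
end
end
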